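/- For every σ > 1 there is a constant C > 0 (depending only on σ) such that for all b > 0 and every Schwartz function ψ : ℝ → ℝ, b³·∫_ℝ ψ(x)²/(1 + b|x|)^{σ+2} dx ≤ C·( b²·ψ(0)² + b·∫_ℝ ψ'(x)²/(1 + b|x|)^σ dx ). -/

import Mathlib

open MeasureTheory Set Filter Real

lemma hw_deriv (b s : ℝ) {x : ℝ} (hx : 0 < 1 + b * x) :
    HasDerivAt (fun y => (1 + b * y) ^ s) (s * (1 + b * x) ^ (s - 1) * b) x := by
  have h1 : HasDerivAt (fun y : ℝ => 1 + b * y) b x := by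
    simpa using ((hasDerivAt_id x).const_mul b).const_add 1
  exact (Real.hasDerivAt_rpow_const (Or.inl hx.ne')).comp x h1

lemma weight_tendsto (b s : ℝ) (hb : 0 < b) (hs : s < 0) :
    Tendsto (fun x : ℝ => (1 + b * x) ^ s) atTop (nhds 0) := by
  have ht : Tendsto (fun x : ℝ => 1 + b * x) atTop atTop :=
    tendsto_atTop_add_const_left _ 1 (tendsto_id.const_mul_atTop hb)
  have := (tendsto_rpow_neg_atTop (y := -s) (by linarith)).comp ht
  simpa [Function.comp_def] using this

lemma weight_integrableOn (b s : ℝ) (hb : 0 < b) (hs : 1 < s) :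
    IntegrableOn (fun x : ℝ => (1 + b * x) ^ (-s)) (Ioi (0:ℝ)) := by
  have h1s : (1:ℝ) - s ≠ 0 := by intro h; nlinarith
  apply integrableOn_Ioi_deriv_of_nonneg' (g := fun x => (1 + b * x) ^ (1 - s) / (b * (1 - s)))
    (l := 0)
  · intro x hx
    have hx' : 0 < 1 + b * x := by
      have : 0 ≤ b * x := mul_nonneg hb.le hx.out
      linarith
    have h := (hw_deriv b (1 - s) hx').div_const (b * (1 - s))
    have he : (1:ℝ) - s - 1 = -s := by ring
    rw [he] at h
    refine h.congr_deriv ?_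
    field_simp
  · intro x hx
    have hx' : (0:ℝ) ≤ 1 + b * x := by nlinarith [hx.out]
    exact rpow_nonneg hx' _
  · have := (weight_tendsto b (1 - s) hb (by linarith)).div_const (b * (1 - s))
    simpa using this

lemma integrableOn_mul_weight {b s M : ℝ} (hb : 0 < b) (hs : 1 < s) {g : ℝ → ℝ}
    (hg : Continuous g) (hM : ∀ x, |g x| ≤ M) :
    IntegrableOn (fun x : ℝ => g x * (1 + b * x) ^ (-s)) (Ioi (0:ℝ)) := by
  have hw := weight_integrableOn b s hb hs
  refine Integrable.mono' (hw.const_mul M) ?_ ?_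
  · refine ContinuousOn.aestronglyMeasurable ?_ measurableSet_Ioi
    refine hg.continuousOn.mul (ContinuousOn.rpow_const ?_ ?_)
    · exact (continuous_const.add (continuous_const.mul continuous_id)).continuousOn
    · intro x hx
      have hx' : 0 < 1 + b * x := by
        have : 0 ≤ b * x := mul_nonneg hb.le (le_of_lt hx.out)
        linarith
      exact Or.inl hx'.ne'
  · refine (ae_restrict_iff' measurableSet_Ioi).2 (Eventually.of_forall fun x hx => ?_)
    have hx' : (0:ℝ) ≤ 1 + b * x := by nlinarith [hx.out]
    have hwnn : (0:ℝ) ≤ (1 + b * x) ^ (-s) := rpow_nonneg hx' _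
    rw [Real.norm_eq_abs, abs_mul, abs_of_nonneg hwnn]
    exact mul_le_mul_of_nonneg_right (hM x) hwnn


lemma pos_base {b x : ℝ} (hb : 0 < b) (hx : 0 ≤ x) : 0 < 1 + b * x := by nlinarith

lemma key_half (σ b : ℝ) (hσ : 1 < σ) (hb : 0 < b) (f f' : ℝ → ℝ)
    (hd : ∀ x, HasDerivAt f (f' x) x) (hc : Continuous f')
    (M : ℝ) (hMf : ∀ x, |f x| ≤ M) (hMf' : ∀ x, |f' x| ≤ M) :
    b * ∫ x in Ioi (0:ℝ), f x ^ 2 / (1 + b * x) ^ (σ + 2)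
      ≤ (2 / (σ + 1)) * f 0 ^ 2
        + (4 / (b * (σ + 1) ^ 2)) * ∫ x in Ioi (0:ℝ), f' x ^ 2 / (1 + b * x) ^ σ := by
  have hσ1 : 0 < σ + 1 := by linarith
  have hcf : Continuous f := continuous_iff_continuousAt.2 fun x => (hd x).continuousAt
  -- rewrite the integrals in product form
  have hA : ∫ x in Ioi (0:ℝ), f x ^ 2 / (1 + b * x) ^ (σ + 2)
      = ∫ x in Ioi (0:ℝ), f x ^ 2 * (1 + b * x) ^ (-(σ + 2)) := by
    refine setIntegral_congr_fun measurableSet_Ioi fun x hx => ?_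
    rw [Real.rpow_neg (pos_base hb (le_of_lt hx.out)).le, div_eq_mul_inv]
  have hD : ∫ x in Ioi (0:ℝ), f' x ^ 2 / (1 + b * x) ^ σ
      = ∫ x in Ioi (0:ℝ), f' x ^ 2 * (1 + b * x) ^ (-σ) := by
    refine setIntegral_congr_fun measurableSet_Ioi fun x hx => ?_
    rw [Real.rpow_neg (pos_base hb (le_of_lt hx.out)).le, div_eq_mul_inv]
  rw [hA, hD]
  set A := ∫ x in Ioi (0:ℝ), f x ^ 2 * (1 + b * x) ^ (-(σ + 2)) with hAdef
  set D := ∫ x in Ioi (0:ℝ), f' x ^ 2 * (1 + b * x) ^ (-σ) with hDdef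
  -- integrability
  have hMnn : 0 ≤ M := le_trans (abs_nonneg _) (hMf 0)
  have IA : IntegrableOn (fun x : ℝ => f x ^ 2 * (1 + b * x) ^ (-(σ + 2))) (Ioi (0:ℝ)) := by
    refine integrableOn_mul_weight hb (by linarith) (by continuity) (M := M ^ 2) fun x => ?_
    rw [abs_pow]
    exact pow_le_pow_left₀ (abs_nonneg _) (hMf x) 2
  have ID : IntegrableOn (fun x : ℝ => f' x ^ 2 * (1 + b * x) ^ (-σ)) (Ioi (0:ℝ)) := by
    refine integrableOn_mul_weight hb hσ (by continuity) (M := M ^ 2) fun x => ?_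
    rw [abs_pow]
    exact pow_le_pow_left₀ (abs_nonneg _) (hMf' x) 2
  have IC : IntegrableOn (fun x : ℝ => 2 * f x * f' x * (1 + b * x) ^ (-(σ + 1)))
      (Ioi (0:ℝ)) := by
    refine integrableOn_mul_weight hb (by linarith) (by continuity) (M := 2 * M * M)
      fun x => ?_
    calc |2 * f x * f' x| = 2 * |f x| * |f' x| := by
          rw [abs_mul, abs_mul]; norm_num
      _ ≤ 2 * M * M := by
          have h1 := hMf x; have h2 := hMf' x
          have := abs_nonneg (f x); have := abs_nonneg (f' x)
          nlinarith
  -- integration by parts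
  set F : ℝ → ℝ := fun x => f x ^ 2 * (1 + b * x) ^ (-(σ + 1)) with hFdef
  set G : ℝ → ℝ := fun x => 2 * f x * f' x * (1 + b * x) ^ (-(σ + 1))
      - b * (σ + 1) * (f x ^ 2 * (1 + b * x) ^ (-(σ + 2))) with hGdef
  have hFderiv : ∀ x ∈ Ici (0:ℝ), HasDerivAt F (G x) x := by
    intro x hx
    have hx' : 0 < 1 + b * x := pos_base hb hx.out
    have h1 : HasDerivAt (fun y => f y ^ 2) (2 * f x * f' x) x := by
      have h := (hd x).fun_pow 2
      refine h.congr_deriv ?_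
      push_cast
      ring
    have h2 := hw_deriv b (-(σ + 1)) hx'
    have h3 := h1.fun_mul h2
    have he : -(σ + 1) - 1 = -(σ + 2) := by ring
    rw [he] at h3
    refine h3.congr_deriv ?_
    simp only [hGdef]
    ring
  have hIG : IntegrableOn G (Ioi (0:ℝ)) := IC.sub (IA.const_mul _)
  have hFlim : Tendsto F atTop (nhds 0) := by
    have hub : ∀ᶠ x : ℝ in atTop, F x ≤ M ^ 2 * (1 + b * x) ^ (-(σ + 1)) := by
      filter_upwards [eventually_ge_atTop (0:ℝ)] with x hx
      have hx' : (0:ℝ) ≤ (1 + b * x) ^ (-(σ + 1)) := rpow_nonneg (pos_base hb hx).le _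
      refine mul_le_mul_of_nonneg_right ?_ hx'
      rw [← sq_abs]
      exact pow_le_pow_left₀ (abs_nonneg _) (hMf x) 2
    have hlb : ∀ᶠ x : ℝ in atTop, 0 ≤ F x := by
      filter_upwards [eventually_ge_atTop (0:ℝ)] with x hx
      have hx' : (0:ℝ) ≤ (1 + b * x) ^ (-(σ + 1)) := rpow_nonneg (pos_base hb hx).le _
      positivity
    have hMlim : Tendsto (fun x : ℝ => M ^ 2 * (1 + b * x) ^ (-(σ + 1))) atTop (nhds 0) := by
      have := (weight_tendsto b (-(σ + 1)) hb (by linarith)).const_mul (M ^ 2)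
      simpa using this
    exact tendsto_of_tendsto_of_tendsto_of_le_of_le' tendsto_const_nhds hMlim hlb hub
  have hIBP : ∫ x in Ioi (0:ℝ), G x = 0 - F 0 :=
    integral_Ioi_of_hasDerivAt_of_tendsto' hFderiv hIG hFlim
  have hF0 : F 0 = f 0 ^ 2 := by simp [hFdef]
  have hsplit : ∫ x in Ioi (0:ℝ), G x
      = (∫ x in Ioi (0:ℝ), 2 * f x * f' x * (1 + b * x) ^ (-(σ + 1)))
        - b * (σ + 1) * A := by
    rw [hGdef]
    rw [integral_sub IC (IA.const_mul _), integral_const_mul]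
  -- pointwise AM-GM bound on the cross term
  have hcross : ∫ x in Ioi (0:ℝ), 2 * f x * f' x * (1 + b * x) ^ (-(σ + 1))
      ≤ (b * (σ + 1) / 2) * A + (2 / (b * (σ + 1))) * D := by
    have hmono : ∫ x in Ioi (0:ℝ), 2 * f x * f' x * (1 + b * x) ^ (-(σ + 1))
        ≤ ∫ x in Ioi (0:ℝ), ((b * (σ + 1) / 2) * (f x ^ 2 * (1 + b * x) ^ (-(σ + 2)))
            + (2 / (b * (σ + 1))) * (f' x ^ 2 * (1 + b * x) ^ (-σ))) := by
      refine setIntegral_mono_on IC ((IA.const_mul _).add (ID.const_mul _))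
        measurableSet_Ioi fun x hx => ?_
      have hp : 0 < 1 + b * x := pos_base hb (le_of_lt hx.out)
      set p := 1 + b * x with hpdef
      set ε := b * (σ + 1) / 2 with hεdef
      have hε : 0 < ε := by positivity
      have e1 : p ^ (-(σ + 1)) = p ^ (-(σ + 2) / 2) * p ^ (-σ / 2) := by
        rw [← Real.rpow_add hp]; norm_num; ring_nf
      have e2 : p ^ (-(σ + 2)) = p ^ (-(σ + 2) / 2) * p ^ (-(σ + 2) / 2) := by
        rw [← Real.rpow_add hp]; norm_num
      have e3 : p ^ (-σ) = p ^ (-σ / 2) * p ^ (-σ / 2) := by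
        rw [← Real.rpow_add hp]; norm_num
      rw [e1, e2, e3]
      set u := f x * p ^ (-(σ + 2) / 2) with hu
      set v := f' x * p ^ (-σ / 2) with hv
      have h2ε : 2 / (b * (σ + 1)) = 1 / ε := by rw [hεdef]; field_simp
      rw [h2ε]
      have expand : 2 * f x * f' x * (p ^ (-(σ + 2) / 2) * p ^ (-σ / 2)) = 2 * (u * v) := by
        rw [hu, hv]; ring
      rw [expand]
      have expand2 : ε * (f x ^ 2 * (p ^ (-(σ + 2) / 2) * p ^ (-(σ + 2) / 2)))
          + 1 / ε * (f' x ^ 2 * (p ^ (-σ / 2) * p ^ (-σ / 2)))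
          = ε * u ^ 2 + (1 / ε) * v ^ 2 := by
        rw [hu, hv]; ring
      rw [expand2]
      have hid : ε * u ^ 2 + 1 / ε * v ^ 2 - 2 * (u * v) = (ε * u - v) ^ 2 / ε := by
        field_simp
        ring
      linarith [hid, div_nonneg (sq_nonneg (ε * u - v)) hε.le]
    calc ∫ x in Ioi (0:ℝ), 2 * f x * f' x * (1 + b * x) ^ (-(σ + 1)) ≤ _ := hmono
      _ = (b * (σ + 1) / 2) * A + (2 / (b * (σ + 1))) * D := by
          rw [integral_add (IA.const_mul _) (ID.const_mul _), integral_const_mul,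
            integral_const_mul]
  -- combine
  have hmain : b * (σ + 1) / 2 * A ≤ f 0 ^ 2 + (2 / (b * (σ + 1))) * D := by
    rw [hsplit, hF0] at hIBP
    linarith
  have hc1 : (2 / (σ + 1)) * (b * (σ + 1) / 2 * A) = b * A := by
    field_simp
  have hc2 : (2 / (σ + 1)) * (f 0 ^ 2 + (2 / (b * (σ + 1))) * D)
      = (2 / (σ + 1)) * f 0 ^ 2 + (4 / (b * (σ + 1) ^ 2)) * D := by
    field_simp
    ring
  have := mul_le_mul_of_nonneg_left hmain (by positivity : (0:ℝ) ≤ 2 / (σ + 1))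
  rw [hc1, hc2] at this
  exact this

lemma integrableOn_Iic_of_neg {g : ℝ → ℝ} (h : IntegrableOn (fun x => g (-x)) (Ioi (0:ℝ))) :
    IntegrableOn g (Iic (0:ℝ)) := by
  have h' : IntegrableOn (fun x => g (-x)) (Ici (0:ℝ)) :=
    (integrableOn_Ici_iff_integrableOn_Ioi (by simp)).2 h
  refine (MeasurePreserving.integrableOn_comp_preimage
    (Measure.measurePreserving_neg (volume : Measure ℝ))
    (Homeomorph.neg ℝ).measurableEmbedding (f := g) (s := Iic 0)).1 ?_
  have hpre : (Neg.neg ⁻¹' (Iic (0:ℝ)) : Set ℝ) = Ici 0 := by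
    ext x; simp
  rw [hpre]
  exact h'

set_option maxHeartbeats 1000000 in
/-- For every `σ > 1` there is a constant `C > 0` (depending
only on `σ`) such that for all `b > 0` and every Schwartz function `ψ : ℝ → ℝ`,
`b³·∫ ψ(x)²/(1 + b|x|)^{σ+2} dx ≤ C·(b²·ψ(0)² + b·∫ ψ'(x)²/(1 + b|x|)^σ dx)`. -/
theorem weighted_hardy_scale_estimate (σ : ℝ) (hσ : 1 < σ) :
    ∃ C : ℝ, 0 < C ∧ ∀ b : ℝ, 0 < b → ∀ ψ : SchwartzMap ℝ ℝ,
      b ^ 3 * ∫ x : ℝ, (ψ x) ^ 2 / (1 + b * |x|) ^ (σ + 2)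
        ≤ C * (b ^ 2 * (ψ 0) ^ 2
            + b * ∫ x : ℝ, (deriv ψ x) ^ 2 / (1 + b * |x|) ^ σ) := by
  refine ⟨2, by norm_num, fun b hb ψ => ?_⟩
  have hσ1 : 0 < σ + 1 := by linarith
  set M : ℝ := max ‖ψ.toBoundedContinuousFunction‖
      ‖(SchwartzMap.derivCLM ℝ ℝ ψ).toBoundedContinuousFunction‖ with hM
  have hMf : ∀ x, |ψ x| ≤ M := fun x => by
    have := ψ.toBoundedContinuousFunction.norm_coe_le_norm x
    simp only [SchwartzMap.toBoundedContinuousFunction_apply, Real.norm_eq_abs] at this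
    exact this.trans (le_max_left _ _)
  have hcd : Continuous (deriv (⇑ψ)) := by
    have : deriv (⇑ψ) = ⇑(SchwartzMap.derivCLM ℝ ℝ ψ) :=
      funext fun x => (SchwartzMap.derivCLM_apply ℝ ψ x).symm
    rw [this]
    exact (SchwartzMap.derivCLM ℝ ℝ ψ).continuous
  have hMd : ∀ x, |deriv (⇑ψ) x| ≤ M := fun x => by
    have := (SchwartzMap.derivCLM ℝ ℝ ψ).toBoundedContinuousFunction.norm_coe_le_norm x
    simp only [SchwartzMap.toBoundedContinuousFunction_apply, Real.norm_eq_abs,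
      SchwartzMap.derivCLM_apply] at this
    exact this.trans (le_max_right _ _)
  have hder : ∀ x, HasDerivAt (⇑ψ) (deriv (⇑ψ) x) x := fun x =>
    (ψ.differentiable.differentiableAt).hasDerivAt
  set fneg : ℝ → ℝ := fun x => ψ (-x) with hfneg
  set fneg' : ℝ → ℝ := fun x => -deriv (⇑ψ) (-x) with hfneg'
  have hdneg : ∀ x, HasDerivAt fneg (fneg' x) x := fun x => by
    have := (hder (-x)).comp x (hasDerivAt_neg x)
    simpa [Function.comp_def] using this
  have hcneg' : Continuous fneg' := (hcd.comp continuous_neg).neg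
  have hMfneg : ∀ x, |fneg x| ≤ M := fun x => hMf (-x)
  have hMfneg' : ∀ x, |fneg' x| ≤ M := fun x => by
    simpa [hfneg', abs_neg] using hMd (-x)
  have k1 := key_half σ b hσ hb (⇑ψ) (deriv (⇑ψ)) hder hcd M hMf hMd
  have k2 := key_half σ b hσ hb fneg fneg' hdneg hcneg' M hMfneg hMfneg'
  have hfneg0 : fneg 0 = ψ 0 := by simp [hfneg]
  rw [hfneg0] at k2
  -- names for the four half-line integrals
  set L1 := ∫ x in Ioi (0:ℝ), ψ x ^ 2 / (1 + b * x) ^ (σ + 2) with hL1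
  set L2 := ∫ x in Ioi (0:ℝ), fneg x ^ 2 / (1 + b * x) ^ (σ + 2) with hL2
  set D1 := ∫ x in Ioi (0:ℝ), deriv (⇑ψ) x ^ 2 / (1 + b * x) ^ σ with hD1
  set D2 := ∫ x in Ioi (0:ℝ), fneg' x ^ 2 / (1 + b * x) ^ σ with hD2
  set g : ℝ → ℝ := fun x => ψ x ^ 2 / (1 + b * |x|) ^ (σ + 2) with hg
  set h : ℝ → ℝ := fun x => deriv (⇑ψ) x ^ 2 / (1 + b * |x|) ^ σ with hh
  -- integrability of g and h on the two half-lines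
  have hgIoi : IntegrableOn g (Ioi (0:ℝ)) := by
    refine ((integrableOn_mul_weight hb (by linarith : (1:ℝ) < σ + 2)
      (ψ.continuous.pow 2) (M := M ^ 2) fun x => by
        rw [Pi.pow_apply, abs_pow]; exact pow_le_pow_left₀ (abs_nonneg _) (hMf x) 2).congr_fun
      ?_ measurableSet_Ioi)
    intro x hx
    simp only [hg, Pi.pow_apply]
    rw [abs_of_pos hx.out, Real.rpow_neg (pos_base hb (le_of_lt hx.out)).le, div_eq_mul_inv]
  have hgneg : IntegrableOn (fun x => g (-x)) (Ioi (0:ℝ)) := by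
    refine ((integrableOn_mul_weight hb (by linarith : (1:ℝ) < σ + 2)
      ((ψ.continuous.comp continuous_neg).pow 2) (M := M ^ 2) fun x => by
        rw [Pi.pow_apply, abs_pow]; exact pow_le_pow_left₀ (abs_nonneg _) (hMfneg x) 2).congr_fun
      ?_ measurableSet_Ioi)
    intro x hx
    simp only [hg, hfneg]
    rw [abs_neg, abs_of_pos hx.out, Real.rpow_neg (pos_base hb (le_of_lt hx.out)).le,
      div_eq_mul_inv]
    rfl
  have hhIoi : IntegrableOn h (Ioi (0:ℝ)) := by
    refine ((integrableOn_mul_weight hb hσ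
      (hcd.pow 2) (M := M ^ 2) fun x => by
        rw [Pi.pow_apply, abs_pow]; exact pow_le_pow_left₀ (abs_nonneg _) (hMd x) 2).congr_fun
      ?_ measurableSet_Ioi)
    intro x hx
    simp only [hh, Pi.pow_apply]
    rw [abs_of_pos hx.out, Real.rpow_neg (pos_base hb (le_of_lt hx.out)).le, div_eq_mul_inv]
  have hhneg : IntegrableOn (fun x => h (-x)) (Ioi (0:ℝ)) := by
    refine ((integrableOn_mul_weight hb hσ
      (hcneg'.pow 2) (M := M ^ 2) fun x => by
        rw [Pi.pow_apply, abs_pow]; exact pow_le_pow_left₀ (abs_nonneg _) (hMfneg' x) 2).congr_fun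
      ?_ measurableSet_Ioi)
    intro x hx
    simp only [hh, hfneg', Pi.pow_apply]
    rw [abs_neg, abs_of_pos hx.out, Real.rpow_neg (pos_base hb (le_of_lt hx.out)).le,
      div_eq_mul_inv, neg_sq]
  -- split the full-line integrals
  have hgsplit : ∫ x : ℝ, g x = L2 + L1 := by
    rw [← intervalIntegral.integral_Iic_add_Ioi (integrableOn_Iic_of_neg hgneg) hgIoi]
    congr 1
    · rw [show Iic (0:ℝ) = Iic (-0) by norm_num, ← integral_comp_neg_Ioi]
      refine setIntegral_congr_fun measurableSet_Ioi fun x hx => ?_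
      simp only [hg, hL2, hfneg]
      rw [abs_neg, abs_of_pos hx.out]
    · refine setIntegral_congr_fun measurableSet_Ioi fun x hx => ?_
      simp only [hg, hL1]
      rw [abs_of_pos hx.out]
  have hhsplit : ∫ x : ℝ, h x = D2 + D1 := by
    rw [← intervalIntegral.integral_Iic_add_Ioi (integrableOn_Iic_of_neg hhneg) hhIoi]
    congr 1
    · rw [show Iic (0:ℝ) = Iic (-0) by norm_num, ← integral_comp_neg_Ioi]
      refine setIntegral_congr_fun measurableSet_Ioi fun x hx => ?_
      simp only [hh, hD2, hfneg']
      rw [abs_neg, abs_of_pos hx.out, neg_sq]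
    · refine setIntegral_congr_fun measurableSet_Ioi fun x hx => ?_
      simp only [hh, hD1]
      rw [abs_of_pos hx.out]
  -- nonnegativity
  have hD1nn : 0 ≤ D1 := setIntegral_nonneg measurableSet_Ioi fun x hx =>
    div_nonneg (sq_nonneg _) (rpow_nonneg (pos_base hb (le_of_lt hx.out)).le _)
  have hD2nn : 0 ≤ D2 := setIntegral_nonneg measurableSet_Ioi fun x hx =>
    div_nonneg (sq_nonneg _) (rpow_nonneg (pos_base hb (le_of_lt hx.out)).le _)
  have hψ0 : (0:ℝ) ≤ ψ 0 ^ 2 := sq_nonneg _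
  -- final arithmetic
  rw [hgsplit, hhsplit]
  have hk : b * (L1 + L2)
      ≤ (4 / (σ + 1)) * ψ 0 ^ 2 + (4 / (b * (σ + 1) ^ 2)) * (D1 + D2) := by
    have : (4 : ℝ) / (σ + 1) = 2 / (σ + 1) + 2 / (σ + 1) := by ring
    rw [this]
    have h4 : (4 / (b * (σ + 1) ^ 2)) * (D1 + D2)
        = (4 / (b * (σ + 1) ^ 2)) * D1 + (4 / (b * (σ + 1) ^ 2)) * D2 := by ring
    rw [h4]
    have : b * (L1 + L2) = b * L1 + b * L2 := by ring
    rw [this]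
    linarith
  have step := mul_le_mul_of_nonneg_left hk (sq_nonneg b)
  have e1 : b ^ 2 * (b * (L1 + L2)) = b ^ 3 * (L2 + L1) := by ring
  have e2 : b ^ 2 * ((4 / (σ + 1)) * ψ 0 ^ 2 + (4 / (b * (σ + 1) ^ 2)) * (D1 + D2))
      = (4 / (σ + 1)) * (b ^ 2 * ψ 0 ^ 2) + (4 / (σ + 1) ^ 2) * (b * (D1 + D2)) := by
    field_simp
  rw [e1, e2] at step
  have c1 : (4 : ℝ) / (σ + 1) ≤ 2 := by
    rw [div_le_iff₀ hσ1]; linarith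
  have c2 : (4 : ℝ) / (σ + 1) ^ 2 ≤ 2 := by
    rw [div_le_iff₀ (by positivity)]; nlinarith
  have hb2ψ : 0 ≤ b ^ 2 * ψ 0 ^ 2 := by positivity
  have hbD : 0 ≤ b * (D1 + D2) := by positivity
  nlinarith [mul_le_mul_of_nonneg_right c1 hb2ψ, mul_le_mul_of_nonneg_right c2 hbD]
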